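/- Let R be a commutative principal ideal domain with the IP₂ property (every 2×2 matrix over R with determinant 0 is a product of idempotent matrices). Then for every positive integer n, every n×n matrix over R with determinant 0 is a product of idempotent matrices. -/

import Mathlib

open Matrix

namespace IPaux

set_option linter.unusedSectionVars false
set_option maxHeartbeats 1000000

variable {R : Type*} [CommRing R]

/-- The block matrix `[[M, m],[wᵀ, s]]` of size `k+1`. -/
def gen {k : ℕ} (M : Matrix (Fin k) (Fin k) R) (m w : Fin k → R) (s : R) :
    Matrix (Fin (k+1)) (Fin (k+1)) R :=
  fun i => Fin.lastCases (Fin.snoc w s) (fun i' => Fin.snoc (M i') (m i')) i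

variable {k : ℕ} {M M₁ M₂ : Matrix (Fin k) (Fin k) R} {m m₁ m₂ w w₁ w₂ : Fin k → R}
  {s s₁ s₂ : R}

@[simp] lemma gen_cc (i j : Fin k) : gen M m w s i.castSucc j.castSucc = M i j := by simp [gen]
@[simp] lemma gen_cl (i : Fin k) : gen M m w s i.castSucc (Fin.last k) = m i := by simp [gen]
@[simp] lemma gen_lc (j : Fin k) : gen M m w s (Fin.last k) j.castSucc = w j := by simp [gen]
@[simp] lemma gen_ll : gen M m w s (Fin.last k) (Fin.last k) = s := by simp [gen]

lemma gen_mul :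
    gen M₁ m₁ w₁ s₁ * gen M₂ m₂ w₂ s₂ =
      gen (M₁ * M₂ + vecMulVec m₁ w₂) (M₁ *ᵥ m₂ + s₂ • m₁) (w₁ ᵥ* M₂ + s₁ • w₂)
        (w₁ ⬝ᵥ m₂ + s₁ * s₂) := by
  ext i j
  rw [Matrix.mul_apply, Fin.sum_univ_castSucc]
  refine Fin.lastCases ?_ (fun i' => ?_) i <;> refine Fin.lastCases ?_ (fun j' => ?_) j <;>
    simp [Matrix.mul_apply, vecMulVec_apply, Matrix.mulVec, Matrix.vecMul, dotProduct,
      Finset.sum_add_distrib, mul_comm]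

lemma gen_one : (gen 1 0 0 1 : Matrix (Fin (k+1)) (Fin (k+1)) R) = 1 := by
  ext i j
  refine Fin.lastCases ?_ (fun i' => ?_) i <;> refine Fin.lastCases ?_ (fun j' => ?_) j <;>
    simp [Matrix.one_apply, Fin.castSucc_inj, (Fin.castSucc_lt_last _).ne,
      (Fin.castSucc_lt_last _).ne']

lemma gen_mulVec (x : Fin k → R) (t : R) :
    gen M m w s *ᵥ Fin.snoc x t = Fin.snoc (M *ᵥ x + t • m) (w ⬝ᵥ x + s * t) := by
  ext i
  rw [Matrix.mulVec, dotProduct, Fin.sum_univ_castSucc]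
  refine Fin.lastCases ?_ (fun i' => ?_) i <;>
    simp [Matrix.mulVec, dotProduct, mul_comm]

lemma vecMul_gen (x : Fin k → R) (t : R) :
    Fin.snoc x t ᵥ* gen M m w s = Fin.snoc (x ᵥ* M + t • w) (x ⬝ᵥ m + t * s) := by
  ext j
  rw [Matrix.vecMul, dotProduct, Fin.sum_univ_castSucc]
  refine Fin.lastCases ?_ (fun j' => ?_) j <;>
    simp [Matrix.vecMul, dotProduct, mul_comm]

lemma gen_eq_of_lastRow_zero (A : Matrix (Fin (k+1)) (Fin (k+1)) R)
    (h : A (Fin.last k) = 0) :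
    A = gen (fun i j => A i.castSucc j.castSucc) (fun i => A i.castSucc (Fin.last k)) 0 0 := by
  ext i j
  refine Fin.lastCases ?_ (fun i' => ?_) i <;> refine Fin.lastCases ?_ (fun j' => ?_) j
  · exact (congrFun h _).trans (gen_ll (M := fun i j => A i.castSucc j.castSucc)
      (m := fun i => A i.castSucc (Fin.last k)) (w := 0)).symm
  · exact (congrFun h _).trans (gen_lc (M := fun i j => A i.castSucc j.castSucc)
      (m := fun i => A i.castSucc (Fin.last k)) (w := 0) (s := 0) j').symm
  · exact (gen_cl (M := fun i j => A i.castSucc j.castSucc)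
      (m := fun i => A i.castSucc (Fin.last k)) (w := 0) (s := 0) i').symm
  · exact (gen_cc (M := fun i j => A i.castSucc j.castSucc)
      (m := fun i => A i.castSucc (Fin.last k)) (w := 0) (s := 0) i' j').symm

/-- `A` is a product of idempotent matrices. -/
def IsIP {n : Type*} [Fintype n] [DecidableEq n] (A : Matrix n n R) : Prop :=
  ∃ l : List (Matrix n n R), (∀ E ∈ l, E * E = E) ∧ A = l.prod

namespace IsIP

variable {n : Type*} [Fintype n] [DecidableEq n] {A B C : Matrix n n R}

lemma of_idem (h : A * A = A) : IsIP A := ⟨[A], by simpa using h, by simp⟩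

lemma one : IsIP (1 : Matrix n n R) := ⟨[], by simp, by simp⟩

lemma mul (hA : IsIP A) (hB : IsIP B) : IsIP (A * B) := by
  obtain ⟨l₁, h₁, rfl⟩ := hA
  obtain ⟨l₂, h₂, rfl⟩ := hB
  refine ⟨l₁ ++ l₂, ?_, by simp⟩
  intro E hE
  rcases List.mem_append.1 hE with h | h
  exacts [h₁ E h, h₂ E h]

private lemma conj_prod (C : Matrix n n R) (hC : IsUnit C.det) (l : List (Matrix n n R)) :
    C⁻¹ * l.prod * C = (l.map fun E => C⁻¹ * E * C).prod := by
  induction l with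
  | nil => simp [Matrix.nonsing_inv_mul _ hC]
  | cons E t ih =>
    have h1 : C * C⁻¹ = 1 := Matrix.mul_nonsing_inv _ hC
    simp only [List.map_cons, List.prod_cons, ← ih]
    calc C⁻¹ * (E * t.prod) * C = C⁻¹ * E * (C * C⁻¹) * t.prod * C := by
          rw [h1, Matrix.mul_one]; noncomm_ring
      _ = C⁻¹ * E * C * (C⁻¹ * t.prod * C) := by noncomm_ring

lemma conj (hC : IsUnit C.det) (hA : IsIP A) : IsIP (C⁻¹ * A * C) := by
  obtain ⟨l, hl, rfl⟩ := hA
  refine ⟨l.map fun E => C⁻¹ * E * C, ?_, conj_prod C hC l⟩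
  intro E hE
  obtain ⟨F, hF, rfl⟩ := List.mem_map.1 hE
  have h1 : C * C⁻¹ = 1 := Matrix.mul_nonsing_inv _ hC
  calc C⁻¹ * F * C * (C⁻¹ * F * C) = C⁻¹ * (F * (C * C⁻¹) * F) * C := by noncomm_ring
    _ = C⁻¹ * F * C := by rw [h1, Matrix.mul_one, hl F hF]

end IsIP

/-- padding with a `1` in the corner. -/
def pad {k : ℕ} (M : Matrix (Fin k) (Fin k) R) : Matrix (Fin (k+1)) (Fin (k+1)) R :=
  gen M 0 0 1

lemma pad_mul (N : Matrix (Fin k) (Fin k) R) : pad M * pad N = pad (M * N) := by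
  rw [pad, pad, pad, gen_mul,
    show M * N + vecMulVec (0 : Fin k → R) (0 : Fin k → R) = M * N by
      ext i j; simp [vecMulVec],
    show M *ᵥ (0 : Fin k → R) + (1:R) • (0 : Fin k → R) = 0 by simp,
    show (0 : Fin k → R) ᵥ* N + (1:R) • (0 : Fin k → R) = 0 by simp,
    show (0 : Fin k → R) ⬝ᵥ (0 : Fin k → R) + (1:R) * (1:R) = 1 by simp]

lemma isIP_pad (h : IsIP M) : IsIP (pad M) := by
  obtain ⟨l, hl, rfl⟩ := h
  refine ⟨l.map pad, ?_, ?_⟩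
  · intro E hE
    obtain ⟨F, hF, rfl⟩ := List.mem_map.1 hE
    rw [pad_mul, hl F hF]
  · induction l with
    | nil => simp only [List.prod_nil, List.map_nil]; exact gen_one
    | cons E t ih =>
      simp only [List.prod_cons, List.map_cons,
        ← ih (fun F hF => hl F (List.mem_cons_of_mem _ hF)), pad_mul]

/-- the idempotent `[[1, m],[0, 0]]`. -/
lemma isIP_genE (m : Fin k → R) : IsIP (gen 1 m 0 0) := by
  refine IsIP.of_idem ?_
  rw [gen_mul,
    show (1 : Matrix (Fin k) (Fin k) R) * 1 + vecMulVec m (0 : Fin k → R) = 1 by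
      ext i j; simp [vecMulVec],
    show (1 : Matrix (Fin k) (Fin k) R) *ᵥ m + (0:R) • m = m by simp,
    show (0 : Fin k → R) ᵥ* (1 : Matrix (Fin k) (Fin k) R) + (0:R) • (0 : Fin k → R) = 0 by simp,
    show (0 : Fin k → R) ⬝ᵥ m + (0:R) * (0:R) = 0 by simp]

/-- the idempotent `[[1, 0],[wᵀ, 0]]`. -/
lemma isIP_genF (w : Fin k → R) : IsIP (gen 1 0 w 0) := by
  refine IsIP.of_idem ?_
  rw [gen_mul,
    show (1 : Matrix (Fin k) (Fin k) R) * 1 + vecMulVec (0 : Fin k → R) w = 1 by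
      ext i j; simp [vecMulVec],
    show (1 : Matrix (Fin k) (Fin k) R) *ᵥ (0 : Fin k → R) + (0:R) • (0 : Fin k → R) = 0 by simp,
    show w ᵥ* (1 : Matrix (Fin k) (Fin k) R) + (0:R) • w = w by simp,
    show w ⬝ᵥ (0 : Fin k → R) + (0:R) * (0:R) = 0 by simp]


lemma row_mul {n : Type*} [Fintype n] (M N : Matrix n n R) (i : n) :
    (M * N) i = M i ᵥ* N := by
  funext j
  rw [Matrix.mul_apply, Matrix.vecMul, dotProduct]

lemma vecMul_vecMulVec (x p w : Fin k → R) :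
    x ᵥ* vecMulVec p w = (x ⬝ᵥ p) • w := by
  funext j
  simp [Matrix.vecMul, vecMulVec, dotProduct, Finset.sum_mul, mul_assoc]

lemma vecMulVec_mulVec (p w q : Fin k → R) :
    vecMulVec p w *ᵥ q = (w ⬝ᵥ q) • p := by
  funext i
  simp [Matrix.mulVec, vecMulVec, dotProduct, Finset.mul_sum, mul_assoc, mul_comm,
    mul_left_comm]

lemma two_point_dot {i₀ j₀ : Fin k} (hne : i₀ ≠ j₀) (r t : R) (z : Fin k → R) :
    (fun l => if l = i₀ then r else if l = j₀ then t else 0) ⬝ᵥ z = r * z i₀ + t * z j₀ := by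
  rw [dotProduct]
  have : ∀ l, (if l = i₀ then r else if l = j₀ then t else 0) * z l =
      (if l = i₀ then r * z i₀ else 0) + (if l = j₀ then t * z j₀ else 0) := by
    intro l
    by_cases h1 : l = i₀
    · subst h1; simp [hne]
    · by_cases h2 : l = j₀
      · subst h2; simp [if_neg h1]
      · simp [if_neg h1, if_neg h2]
  rw [Finset.sum_congr rfl fun l _ => this l, Finset.sum_add_distrib,
    Finset.sum_ite_eq' Finset.univ i₀ (fun _ => r * z i₀),
    Finset.sum_ite_eq' Finset.univ j₀ (fun _ => t * z j₀)]
  simp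

lemma dot_snoc (x y : Fin k → R) (t r : R) :
    Fin.snoc x t ⬝ᵥ Fin.snoc y r = x ⬝ᵥ y + t * r := by
  rw [dotProduct, Fin.sum_univ_castSucc]
  simp [dotProduct]

lemma snoc_zero_zero : (Fin.snoc (0 : Fin k → R) (0 : R)) = (0 : Fin (k+1) → R) := by
  funext i
  refine Fin.lastCases ?_ (fun i' => ?_) i <;> simp

/-- `[[1, m],[0,0]] * [[M,0],[0,1]] = [[M, m],[0,0]]`. -/
lemma gen_E_mul_pad : gen 1 m 0 0 * pad M = gen M m 0 0 := by
  rw [pad, gen_mul,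
    show (1 : Matrix (Fin k) (Fin k) R) * M + vecMulVec m (0 : Fin k → R) = M by
      funext i j; simp [vecMulVec],
    show (1 : Matrix (Fin k) (Fin k) R) *ᵥ (0 : Fin k → R) + (1:R) • m = m by simp,
    show (0 : Fin k → R) ᵥ* M + (0:R) • (0 : Fin k → R) = 0 by simp,
    show (0 : Fin k → R) ⬝ᵥ (0 : Fin k → R) + (0:R) * (1:R) = 0 by simp]

lemma isIP_gen_of_isIP (h : IsIP M) (m : Fin k → R) : IsIP (gen M m 0 0) := by
  rw [← gen_E_mul_pad]
  exact (isIP_genE m).mul (isIP_pad h)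

/-- `[[N, c],[0,0]] * [[1,0],[wᵀ,0]] = [[N + c wᵀ, 0],[0,0]]`. -/
lemma gen_mul_genF (N : Matrix (Fin k) (Fin k) R) (c w : Fin k → R) :
    gen N c 0 0 * gen 1 0 w 0 = gen (N + vecMulVec c w) 0 0 0 := by
  rw [gen_mul,
    show N * 1 = N from Matrix.mul_one N,
    show N *ᵥ (0 : Fin k → R) + (0:R) • c = 0 by simp,
    show (0 : Fin k → R) ᵥ* (1 : Matrix (Fin k) (Fin k) R) + (0:R) • w = 0 by simp,
    show (0 : Fin k → R) ⬝ᵥ (0 : Fin k → R) + (0:R) * (0:R) = 0 by simp]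

/-- `[[1, p],[0,0]] * [[M - p wᵀ, m - s p],[wᵀ, s]] = [[M, m],[0,0]]`. -/
lemma gen_factor (p w : Fin k → R) (s : R) :
    gen 1 p 0 0 * gen (M - vecMulVec p w) (m - s • p) w s = gen M m 0 0 := by
  rw [gen_mul,
    show (1 : Matrix (Fin k) (Fin k) R) * (M - vecMulVec p w) + vecMulVec p w = M by
      rw [Matrix.one_mul, sub_add_cancel],
    show (1 : Matrix (Fin k) (Fin k) R) *ᵥ (m - s • p) + s • p = m by
      rw [Matrix.one_mulVec, sub_add_cancel],
    show (0 : Fin k → R) ᵥ* (M - vecMulVec p w) + (0:R) • w = 0 by simp,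
    show (0 : Fin k → R) ⬝ᵥ (m - s • p) + (0:R) * s = 0 by simp]

section PID

variable [IsDomain R] [IsPrincipalIdealRing R]

lemma primitive_part {N : ℕ} (v : Fin N → R) (hv : v ≠ 0) :
    ∃ (g : R) (bh : Fin N → R), g ≠ 0 ∧ (∀ i, v i = g * bh i) ∧
      Ideal.span (Set.range bh) = ⊤ := by
  set I := Ideal.span (Set.range v) with hI
  haveI : I.IsPrincipal := IsPrincipalIdealRing.principal I
  set g := Submodule.IsPrincipal.generator I with hg
  have hfac : ∀ i, ∃ a, v i = g * a := by
    intro i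
    obtain ⟨a, ha⟩ := (Submodule.IsPrincipal.mem_iff_eq_smul_generator I).1
      (Ideal.subset_span ⟨i, rfl⟩)
    exact ⟨a, by rw [ha, smul_eq_mul, mul_comm]⟩
  choose bh hbh using hfac
  have hg0 : g ≠ 0 := by
    intro h0
    apply hv
    funext i
    rw [hbh i, h0, zero_mul]; rfl
  refine ⟨g, bh, hg0, hbh, ?_⟩
  have hgI : g ∈ I := Submodule.IsPrincipal.generator_mem I
  obtain ⟨c, hc⟩ := Ideal.mem_span_range_iff_exists_fun.1 hgI
  have hcan : g * (∑ i, c i * bh i) = g * 1 := by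
    rw [mul_one, Finset.mul_sum]
    conv_rhs => rw [← hc]
    refine Finset.sum_congr rfl fun i _ => ?_
    rw [hbh i]; ring
  rw [Ideal.eq_top_iff_one]
  exact Ideal.mem_span_range_iff_exists_fun.2 ⟨c, mul_left_cancel₀ hg0 hcan⟩

lemma gcd_pair (x' y' : R) (hx : x' ≠ 0) :
    ∃ g₀ x y a b : R, x' = g₀ * x ∧ y' = g₀ * y ∧ a * x + b * y = 1 := by
  haveI : (Ideal.span ({x', y'} : Set R)).IsPrincipal :=
    IsPrincipalIdealRing.principal _
  obtain ⟨x, hxx⟩ := (Submodule.IsPrincipal.mem_iff_eq_smul_generator _).1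
    (Ideal.subset_span (by simp) : x' ∈ Ideal.span ({x', y'} : Set R))
  obtain ⟨y, hyy⟩ := (Submodule.IsPrincipal.mem_iff_eq_smul_generator _).1
    (Ideal.subset_span (by simp) : y' ∈ Ideal.span ({x', y'} : Set R))
  obtain ⟨a, b, hab⟩ := Ideal.mem_span_pair.1
    (Submodule.IsPrincipal.generator_mem (Ideal.span ({x', y'} : Set R)))
  set g₀ := Submodule.IsPrincipal.generator (Ideal.span ({x', y'} : Set R)) with hg
  have hg0 : g₀ ≠ 0 := fun h0 => hx (by rw [hxx, h0, smul_zero])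
  have hcan : g₀ * (a * x + b * y) = g₀ * 1 := by
    rw [mul_one]
    conv_rhs => rw [← hab, hxx, hyy]
    simp only [smul_eq_mul]; ring
  exact ⟨g₀, x, y, a, b, by rw [hxx, smul_eq_mul, mul_comm],
    by rw [hyy, smul_eq_mul, mul_comm], mul_left_cancel₀ hg0 hcan⟩

lemma completion :
    ∀ (k : ℕ) (b : Fin (k+1) → R), Ideal.span (Set.range b) = ⊤ →
    ∃ C : Matrix (Fin (k+1)) (Fin (k+1)) R, IsUnit C.det ∧ C (Fin.last k) = b := by
  intro k
  induction k with
  | zero =>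
    intro b hb
    have h1 : (1:R) ∈ Ideal.span (Set.range b) := by rw [hb]; exact Submodule.mem_top
    obtain ⟨c, hc⟩ := Ideal.mem_span_range_iff_exists_fun.1 h1
    rw [Fin.sum_univ_one] at hc
    refine ⟨fun _ _ => b 0, ?_, ?_⟩
    · rw [Matrix.det_fin_one (A := fun _ _ => b 0)]
      exact IsUnit.of_mul_eq_one _ (by rw [mul_comm]; exact hc)
    · funext j
      rw [Fin.eq_zero j]
  | succ k ih =>
    intro b hb
    have h1 : (1:R) ∈ Ideal.span (Set.range b) := by rw [hb]; exact Submodule.mem_top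
    obtain ⟨d, hd⟩ := Ideal.mem_span_range_iff_exists_fun.1 h1
    rw [Fin.sum_univ_castSucc] at hd
    set b' : Fin (k+1) → R := fun i => b i.castSucc with hb'def
    set bl : R := b (Fin.last (k+1)) with hbldef
    set I := Ideal.span (Set.range b') with hIdef
    haveI hprin : I.IsPrincipal := IsPrincipalIdealRing.principal I
    set g : R := Submodule.IsPrincipal.generator I with hgdef
    have hmem : ∀ i, b' i ∈ I := fun i => Ideal.subset_span ⟨i, rfl⟩
    have hfac : ∀ i, ∃ a, b' i = a * g := by
      intro i
      obtain ⟨a, ha⟩ := (Submodule.IsPrincipal.mem_iff_eq_smul_generator I).1 (hmem i)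
      exact ⟨a, by simpa [smul_eq_mul] using ha⟩
    choose u hu using hfac
    have hu' : ∀ i : Fin (k+1), b i.castSucc = u i * g := fun i => hu i
    by_cases hg0 : g = 0
    · -- all b' are zero, bl is a unit
      have hbz : ∀ i : Fin (k+1), b i.castSucc = 0 := fun i => by
        rw [hu' i, hg0, mul_zero]
      have hd' : d (Fin.last (k+1)) * bl = 1 := by
        rw [← hd]
        simp [hbz]
      refine ⟨Matrix.diagonal (fun i => if i = Fin.last (k+1) then bl else 1), ?_, ?_⟩
      · rw [Matrix.det_diagonal]
        refine IsUnit.of_mul_eq_one (d (Fin.last (k+1))) ?_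
        rw [Finset.prod_eq_single (Fin.last (k+1)) (fun i _ hi => by simp [hi])
          (by simp), if_pos rfl, mul_comm]
        exact hd'
      · funext j
        refine Fin.lastCases ?_ (fun j' => ?_) j
        · rw [Matrix.diagonal_apply_eq]; simp [hbldef]
        · rw [Matrix.diagonal_apply_ne' _ (Fin.castSucc_lt_last j').ne]
          exact (hbz j').symm
    · -- main case
      have huspan : Ideal.span (Set.range u) = ⊤ := by
        have hgI : g ∈ I := Submodule.IsPrincipal.generator_mem I
        obtain ⟨c, hc⟩ := Ideal.mem_span_range_iff_exists_fun.1 hgI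
        have : (∑ i, c i * u i) * g = 1 * g := by
          rw [one_mul, Finset.sum_mul]
          conv_rhs => rw [← hc]
          refine Finset.sum_congr rfl (fun i _ => ?_)
          rw [hu i]; ring
        have h1u : ∑ i, c i * u i = 1 := mul_right_cancel₀ hg0 this
        rw [Ideal.eq_top_iff_one]
        exact Ideal.mem_span_range_iff_exists_fun.2 ⟨c, h1u⟩
      obtain ⟨C', hC'det, hC'row⟩ := ih u huspan
      set α : R := ∑ i, d i.castSucc * u i with hαdef
      set β : R := d (Fin.last (k+1)) with hβdef
      have hαβ : α * g + β * bl = 1 := by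
        rw [← hd, Finset.sum_mul]
        congr 1
        refine Finset.sum_congr rfl (fun i _ => ?_)
        rw [hu' i]; ring
      -- assemble the completion matrix
      set e1 : Fin (k+1) ⊕ Fin 1 ≃ Fin (k+2) := finSumFinEquiv with he1
      set e2 : Fin k ⊕ Fin 2 ≃ Fin (k+2) := finSumFinEquiv with he2
      set K : Matrix (Fin 2) (Fin 2) R := !![-β, α; g, bl] with hK
      set D : Matrix (Fin (k+2)) (Fin (k+2)) R :=
        (Matrix.fromBlocks C' 0 0 (1 : Matrix (Fin 1) (Fin 1) R)).submatrix e1.symm e1.symm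
        with hD
      set P : Matrix (Fin (k+2)) (Fin (k+2)) R :=
        (Matrix.fromBlocks (1 : Matrix (Fin k) (Fin k) R) 0 0 K).submatrix e2.symm e2.symm
        with hP
      have hdetD : D.det = C'.det := by
        rw [hD, Matrix.det_submatrix_equiv_self, Matrix.det_fromBlocks_zero₂₁,
          Matrix.det_one, mul_one]
      have hdetP : P.det = -1 := by
        rw [hP, Matrix.det_submatrix_equiv_self, Matrix.det_fromBlocks_zero₂₁,
          Matrix.det_one, one_mul, hK, Matrix.det_fin_two_of]
        have : -β * bl - α * g = -(α * g + β * bl) := by ring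
        rw [this, hαβ]
      have he2r1 : e2 (Sum.inr (1 : Fin 2)) = Fin.last (k+1) := by
        rw [he2, finSumFinEquiv_apply_right]
        ext
        simp
      have he2r0 : e2 (Sum.inr (0 : Fin 2)) = (Fin.last k).castSucc := by
        rw [he2, finSumFinEquiv_apply_right]
        ext
        simp
      have he1pen : e1 (Sum.inl (Fin.last k)) = (Fin.last k).castSucc := by
        rw [he1, finSumFinEquiv_apply_left]
        ext
        simp
      have he1last : e1 (Sum.inr (0 : Fin 1)) = Fin.last (k+1) := by
        rw [he1, finSumFinEquiv_apply_right]
        ext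
        simp
      have he1c : ∀ j' : Fin (k+1), e1 (Sum.inl j') = j'.castSucc := by
        intro j'
        rw [he1, finSumFinEquiv_apply_left]
        ext
        simp
      refine ⟨P * D, ?_, ?_⟩
      · rw [Matrix.det_mul, hdetP, hdetD]
        exact (isUnit_one.neg).mul hC'det
      · funext j
        rw [Matrix.mul_apply]
        rw [← Equiv.sum_comp e2 (fun l => P (Fin.last (k+1)) l * D l j)]
        rw [Fintype.sum_sum_type]
        have hPlast : ∀ x, P (Fin.last (k+1)) (e2 x) =
            (Matrix.fromBlocks (1 : Matrix (Fin k) (Fin k) R) 0 0 K) (Sum.inr 1) x := by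
          intro x
          rw [hP, Matrix.submatrix_apply, ← he2r1, Equiv.symm_apply_apply,
            Equiv.symm_apply_apply]
        have hz : ∀ x : Fin k,
            P (Fin.last (k+1)) (e2 (Sum.inl x)) * D (e2 (Sum.inl x)) j = 0 := by
          intro x
          rw [hPlast, Matrix.fromBlocks_apply₂₁]
          simp
        rw [Finset.sum_congr rfl (fun x _ => hz x), Finset.sum_const_zero, zero_add,
          Fin.sum_univ_two, hPlast, hPlast, Matrix.fromBlocks_apply₂₂,
          Matrix.fromBlocks_apply₂₂]
        have hK10 : K (1 : Fin 2) (0 : Fin 2) = g := by rw [hK]; simp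
        have hK11 : K (1 : Fin 2) (1 : Fin 2) = bl := by rw [hK]; simp
        rw [hK10, hK11, he2r0, he2r1]
        have hDpen : ∀ j : Fin (k+2), D ((Fin.last k).castSucc) j =
            (Matrix.fromBlocks C' 0 0 (1 : Matrix (Fin 1) (Fin 1) R))
              (Sum.inl (Fin.last k)) (e1.symm j) := by
          intro j
          rw [hD, Matrix.submatrix_apply, ← he1pen, Equiv.symm_apply_apply]
        have hDlast : ∀ j : Fin (k+2), D (Fin.last (k+1)) j =
            (Matrix.fromBlocks C' 0 0 (1 : Matrix (Fin 1) (Fin 1) R))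
              (Sum.inr 0) (e1.symm j) := by
          intro j
          rw [hD, Matrix.submatrix_apply, ← he1last, Equiv.symm_apply_apply]
        have hsym_last : e1.symm (Fin.last (k+1)) = Sum.inr (0 : Fin 1) := by
          rw [← he1last, Equiv.symm_apply_apply]
        have hsym_c : ∀ j' : Fin (k+1), e1.symm j'.castSucc = Sum.inl j' := by
          intro j'
          rw [← he1c j', Equiv.symm_apply_apply]
        refine Fin.lastCases ?_ (fun j' => ?_) j
        · rw [hDpen, hDlast, hsym_last,
            Matrix.fromBlocks_apply₁₂, Matrix.fromBlocks_apply₂₂]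
          simp [hbldef]
        · rw [hDpen, hDlast, hsym_c j',
            Matrix.fromBlocks_apply₁₁, Matrix.fromBlocks_apply₂₁, hC'row]
          rw [hu' j']
          simp [mul_comm]

-- STEP LEMMA (to be appended inside PID section)
lemma reduce_to_gen {N : ℕ} (A : Matrix (Fin (N+1)) (Fin (N+1)) R) (hA : A.det = 0) :
    ∃ (C : Matrix (Fin (N+1)) (Fin (N+1)) R) (M : Matrix (Fin N) (Fin N) R) (m : Fin N → R),
      IsUnit C.det ∧ C * A * C⁻¹ = gen M m 0 0 := by
  obtain ⟨v, hv0, hvA⟩ := Matrix.exists_vecMul_eq_zero_iff.2 hA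
  obtain ⟨g, bh, hg0, hfac, hspan⟩ := primitive_part v hv0
  have hbA : bh ᵥ* A = 0 := by
    funext j
    have : (v ᵥ* A) j = g * (bh ᵥ* A) j := by
      rw [Matrix.vecMul, Matrix.vecMul, dotProduct, dotProduct, Finset.mul_sum]
      refine Finset.sum_congr rfl fun i _ => ?_
      rw [hfac i]; ring
    have h0 : g * (bh ᵥ* A) j = 0 := by rw [← this, hvA]; rfl
    rcases mul_eq_zero.1 h0 with h | h
    · exact absurd h hg0
    · exact h
  obtain ⟨C, hCdet, hCrow⟩ := completion N bh hspan
  have hlast : (C * A * C⁻¹) (Fin.last N) = 0 := by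
    rw [row_mul, row_mul, hCrow, hbA, Matrix.zero_vecMul]
  exact ⟨C, _, _, hCdet, gen_eq_of_lastRow_zero _ hlast⟩

lemma conj_recover {N : ℕ} (A C : Matrix (Fin N) (Fin N) R) [DecidableEq (Fin N)]
    (hCdet : IsUnit C.det) : C⁻¹ * (C * A * C⁻¹) * C = A := by
  have h1 := Matrix.nonsing_inv_mul C hCdet
  calc C⁻¹ * (C * A * C⁻¹) * C = (C⁻¹ * C) * A * (C⁻¹ * C) := by noncomm_ring
    _ = A := by rw [h1, Matrix.one_mul, Matrix.mul_one]

lemma step {k : ℕ}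
    (ih : ∀ M₀ : Matrix (Fin (k+2)) (Fin (k+2)) R, M₀.det = 0 → IsIP M₀) :
    ∀ A : Matrix (Fin (k+2+1)) (Fin (k+2+1)) R, A.det = 0 → IsIP A := by
  intro A hA
  obtain ⟨C, M, m, hCdet, hCA⟩ := reduce_to_gen A hA
  have hrec : A = C⁻¹ * gen M m 0 0 * C := by
    rw [← hCA]; exact (conj_recover A C hCdet).symm
  rw [hrec]
  refine IsIP.conj hCdet ?_
  by_cases hdet : M.det = 0
  · exact isIP_gen_of_isIP (ih M hdet) m
  by_cases hm : m = 0
  · -- `[[M, 0],[0,0]]` with `M` nonsingular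
    subst hm
    set c : Fin (k+2) → R := fun i => M i 0 with hc
    set w : Fin (k+2) → R := fun l => if l = (0 : Fin (k+2)) then 1 else 0 with hw
    set N' : Matrix (Fin (k+2)) (Fin (k+2)) R := M - vecMulVec c w with hN'
    have hN'det : N'.det = 0 := by
      refine Matrix.det_eq_zero_of_column_eq_zero 0 fun i => ?_
      rw [hN']
      simp [vecMulVec, hc, hw]
    have hid : gen M 0 0 0 = gen 1 c 0 0 * pad N' * gen 1 0 w 0 := by
      rw [gen_E_mul_pad, gen_mul_genF, hN', sub_add_cancel]
    rw [hid]
    exact ((isIP_genE c).mul (isIP_pad (ih N' hN'det))).mul (isIP_genF w)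
  · -- main case : `M` nonsingular, `m ≠ 0`
    set q : Fin (k+2) → R := M.adjugate *ᵥ m with hq
    have hMq : M *ᵥ q = M.det • m := by
      rw [hq, Matrix.mulVec_mulVec, Matrix.mul_adjugate, Matrix.smul_mulVec,
        Matrix.one_mulVec]
    have hq0 : q ≠ 0 := by
      intro h0
      rw [h0, Matrix.mulVec_zero] at hMq
      rcases smul_eq_zero.1 hMq.symm with h | h
      · exact hdet h
      · exact hm h
    obtain ⟨i₀, hqi₀⟩ := Function.ne_iff.1 hq0
    obtain ⟨j₀, hj₀⟩ := exists_ne i₀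
    obtain ⟨g₀, x, y, a, b, hx, hy, hab⟩ := gcd_pair (q i₀) (q j₀) hqi₀
    set η : Fin (k+2) → R := fun l => if l = i₀ then -y else if l = j₀ then x else 0 with hη
    set p : Fin (k+2) → R := fun l => if l = i₀ then -b else if l = j₀ then a else 0 with hp
    have hηq : η ⬝ᵥ q = 0 := by
      rw [hη, two_point_dot (fun h => hj₀ h.symm), hx, hy]; ring
    have hηp : η ⬝ᵥ p = 1 := by
      have e1 : p i₀ = -b := by rw [hp]; simp
      have e2 : p j₀ = a := by rw [hp]; simp [hj₀]
      rw [hη, two_point_dot (fun h => hj₀ h.symm), e1, e2]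
      calc -y * -b + x * a = a * x + b * y := by ring
        _ = 1 := hab
    set w : Fin (k+2) → R := η ᵥ* M with hw
    set s : R := η ⬝ᵥ m with hs
    set Z : Matrix (Fin (k+3)) (Fin (k+3)) R :=
      gen (M - vecMulVec p w) (m - s • p) w s with hZ
    have hfact : gen M m 0 0 = gen 1 p 0 0 * Z := (gen_factor p w s).symm
    set bZ : Fin (k+3) → R := Fin.snoc η 0 with hbZ
    have hbZZ : bZ ᵥ* Z = 0 := by
      rw [hbZ, hZ, vecMul_gen]
      have h1 : η ᵥ* (M - vecMulVec p w) + (0:R) • w = 0 := by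
        rw [Matrix.vecMul_sub, vecMul_vecMulVec, hηp, one_smul, zero_smul, add_zero, ← hw,
          sub_self]
      have h2 : η ⬝ᵥ (m - s • p) + (0:R) * s = 0 := by
        rw [dotProduct_sub, dotProduct_smul, hηp, smul_eq_mul, mul_one, ← hs,
          sub_self, zero_mul, add_zero]
      rw [h1, h2, snoc_zero_zero]
    have hspanZ : Ideal.span (Set.range bZ) = ⊤ := by
      rw [Ideal.eq_top_iff_one]
      refine Ideal.mem_span_range_iff_exists_fun.2 ⟨(Fin.snoc p 0 : Fin (k+3) → R), ?_⟩
      show (Fin.snoc p 0 : Fin (k+3) → R) ⬝ᵥ bZ = 1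
      rw [hbZ, dot_snoc, mul_zero, add_zero, dotProduct_comm, hηp]
    obtain ⟨Cz, hCzdet, hCzrow⟩ := completion _ bZ hspanZ
    have hZ'last : (Cz * Z * Cz⁻¹) (Fin.last (k+2)) = 0 := by
      rw [row_mul, row_mul, hCzrow, hbZZ, Matrix.zero_vecMul]
    set M₀ : Matrix (Fin (k+2)) (Fin (k+2)) R :=
      fun i j => (Cz * Z * Cz⁻¹) i.castSucc j.castSucc with hM₀
    set m₀ : Fin (k+2) → R := fun i => (Cz * Z * Cz⁻¹) i.castSucc (Fin.last (k+2)) with hm₀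
    have hZ' : Cz * Z * Cz⁻¹ = gen M₀ m₀ 0 0 := gen_eq_of_lastRow_zero _ hZ'last
    -- the kernel vector
    set zh : Fin (k+3) → R := Fin.snoc q (-M.det) with hzh
    have hwq : w ⬝ᵥ q = M.det * s := by
      rw [hw, ← dotProduct_mulVec, hMq, dotProduct_smul, smul_eq_mul, hs]
    have hZz : Z *ᵥ zh = 0 := by
      rw [hZ, hzh, gen_mulVec]
      have h1 : (M - vecMulVec p w) *ᵥ q + (-M.det) • (m - s • p) = 0 := by
        rw [Matrix.sub_mulVec, vecMulVec_mulVec, hwq, hMq]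
        funext i
        simp only [Pi.add_apply, Pi.sub_apply, Pi.smul_apply, smul_eq_mul, Pi.zero_apply]
        ring
      have h2 : w ⬝ᵥ q + s * (-M.det) = 0 := by rw [hwq]; ring
      rw [h1, h2, snoc_zero_zero]
    have hCzZz : (Cz * Z * Cz⁻¹) *ᵥ (Cz *ᵥ zh) = 0 := by
      rw [Matrix.mulVec_mulVec, Matrix.mul_assoc, Matrix.nonsing_inv_mul _ hCzdet,
        Matrix.mul_one, ← Matrix.mulVec_mulVec, hZz, Matrix.mulVec_zero]
    have hlastco : (Cz *ᵥ zh) (Fin.last (k+2)) = 0 := by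
      have : (Cz *ᵥ zh) (Fin.last (k+2)) = Cz (Fin.last (k+2)) ⬝ᵥ zh := rfl
      rw [this, hCzrow, hbZ, hzh, dot_snoc, hηq, zero_mul, add_zero]
    set ξ : Fin (k+2) → R := fun i => (Cz *ᵥ zh) i.castSucc with hξ
    have hsnocξ : Cz *ᵥ zh = Fin.snoc ξ 0 := by
      funext i
      refine Fin.lastCases ?_ (fun i' => ?_) i
      · rw [hlastco, Fin.snoc_last]
      · rw [Fin.snoc_castSucc]
    have hM₀ξ : M₀ *ᵥ ξ = 0 := by
      have h0 : gen M₀ m₀ 0 0 *ᵥ Fin.snoc ξ 0 = 0 := by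
        rw [← hZ', ← hsnocξ]; exact hCzZz
      rw [gen_mulVec] at h0
      funext i
      have := congrFun h0 i.castSucc
      rw [Fin.snoc_castSucc] at this
      simpa using this
    have hξ0 : ξ ≠ 0 := by
      intro h0
      have hz0 : Cz *ᵥ zh = 0 := by rw [hsnocξ, h0, snoc_zero_zero]
      have : zh = 0 := by
        have := congrArg (fun v => Cz⁻¹ *ᵥ v) hz0
        simpa [Matrix.mulVec_mulVec, Matrix.nonsing_inv_mul _ hCzdet] using this
      have hcontra := congrFun this (Fin.last (k+2))
      rw [hzh, Fin.snoc_last] at hcontra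
      exact hdet (neg_eq_zero.1 hcontra)
    have hM₀det : M₀.det = 0 := by
      have hsm : M₀.det • ξ = 0 := by
        have : M₀.adjugate *ᵥ (M₀ *ᵥ ξ) = M₀.det • ξ := by
          rw [Matrix.mulVec_mulVec, Matrix.adjugate_mul, Matrix.smul_mulVec,
            Matrix.one_mulVec]
        rw [← this, hM₀ξ, Matrix.mulVec_zero]
      obtain ⟨i, hi⟩ := Function.ne_iff.1 hξ0
      have := congrFun hsm i
      simp only [Pi.smul_apply, smul_eq_mul, Pi.zero_apply] at this
      rcases mul_eq_zero.1 this with h | h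
      · exact h
      · exact absurd h hi
    -- assemble
    have hZIP : IsIP Z := by
      have : Z = Cz⁻¹ * gen M₀ m₀ 0 0 * Cz := by
        rw [← hZ']; exact (conj_recover Z Cz hCzdet).symm
      rw [this]
      exact IsIP.conj hCzdet (isIP_gen_of_isIP (ih M₀ hM₀det) m₀)
    rw [hfact]
    exact (isIP_genE p).mul hZIP

end PID

end IPaux

/-- A commutative principal ideal domain with the IP₂ property has the IP
property: every singular square matrix is a product of idempotent matrices. -/
theorem IP_of_pid_IP2
    (R : Type*) [CommRing R] [IsDomain R] [IsPrincipalIdealRing R]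
    (hIP2 : ∀ A : Matrix (Fin 2) (Fin 2) R, A.det = 0 →
      ∃ l : List (Matrix (Fin 2) (Fin 2) R), (∀ E ∈ l, E * E = E) ∧ A = l.prod) :
    ∀ (n : ℕ) (A : Matrix (Fin (n + 1)) (Fin (n + 1)) R), A.det = 0 →
      ∃ l : List (Matrix (Fin (n + 1)) (Fin (n + 1)) R),
        (∀ E ∈ l, E * E = E) ∧ A = l.prod := by
  intro n
  induction n with
  | zero =>
    intro A hA
    have hA0 : A = 0 := by
      funext i j
      have h00 : A 0 0 = 0 := by rw [← Matrix.det_fin_one A]; exact hA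
      rw [Fin.eq_zero i, Fin.eq_zero j]
      exact h00
    exact ⟨[0], by intro E hE; simp only [List.mem_singleton] at hE; rw [hE, mul_zero],
      by simp [hA0]⟩
  | succ n ih =>
    cases n with
    | zero =>
      intro A hA
      exact hIP2 A hA
    | succ k =>
      intro A hA
      exact IPaux.step (fun M₀ h => ih M₀ h) A hA
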